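/- Let F = (F_1, …, F_m) be a Fractran program. Then F halts for every input n ∈ ℕ if and only if the Fractran-type canonical collection 𝒜_F is complete (an additive system for ℤ). -/

import Mathlib

/-- One Fractran iteration: on input `n ≥ 1`, multiply by the first fraction in the
program giving an integer; return `0` if there is no such fraction (the program halts)
or if `n = 0`. -/
def fractranStep (F : List ℚ) (n : ℕ) : ℕ :=
  if n = 0 then 0
  else
    match F.find? (fun q => ((n : ℚ) * q).den == 1) with
    | some q => ((n : ℚ) * q).num.toNat
    | none => 0

/-- The Fractran program `F` halts on input `n`. -/
def FractranHalts (F : List ℚ) (n : ℕ) : Prop :=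
  ∃ k : ℕ, (fractranStep F)^[k] n = 0

/-- The base `b = 1 + ⌈max_k F_k⌉` of the Fractran-type canonical collection `𝒜_F`. -/
def bBase (F : List ℚ) : ℤ := 1 + (F.map fun q => ⌈q⌉).foldr max 0

/-- The bases of `𝒜_F`: `b_i = b^(i+1)`. -/
def bF (F : List ℚ) (i : ℕ) : ℤ := bBase F ^ (i + 1)

/-- The digit maps of `𝒜_F` on `[0, b_i)`: `f_F` except at the exceptional value
`b_i - 1`, which is sent to `1`. -/
def digitF (F : List ℚ) (i : ℕ) (r : ℤ) : ℤ :=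
  if r = bF F i - 1 then 1 else (fractranStep F r.toNat : ℤ)

/-- The residue sets of `𝒜_F`: `T_i = {r - b_i · f_i(r) : 0 ≤ r < b_i}`. -/
def TFr (F : List ℚ) (i : ℕ) : Set ℤ :=
  (fun r => r - bF F i * digitF F i r) '' Set.Ico 0 (bF F i)

/-- The canonical system maps of `𝒜_F`: `f_i(n) = (n - t_i(n)) / b_i`, where
`t_i(n) = r - b_i · f_i(r)` with `r = n mod b_i ∈ [0, b_i)` is the unique element of
`T_i` congruent to `n` modulo `b_i`. -/
def fFr (F : List ℚ) (i : ℕ) (n : ℤ) : ℤ :=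
  (n - Int.emod n (bF F i)) / bF F i + digitF F i (Int.emod n (bF F i))

/-- The trajectory of `n` in the canonical system of `𝒜_F`:
`n_0 = n`, `n_{i+1} = f_i(n_i)`. -/
def trajFr (F : List ℚ) (n : ℤ) : ℕ → ℤ
  | 0 => n
  | i + 1 => fFr F i (trajFr F n i)

/-- `prodBases b i = b 0 * b 1 * ⋯ * b (i-1)`. -/
def prodBases (b : ℕ → ℤ) (i : ℕ) : ℤ := ∏ j ∈ Finset.range i, b j

/-- The member sets `A i = (b 0 ⋯ b (i-1)) • T i` of a canonical collection. -/
def memberSet (b : ℕ → ℤ) (T : ℕ → Set ℤ) (i : ℕ) : Set ℤ :=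
  (fun t => prodBases b i * t) '' T i

/-- `a` is a representation of `n` in the collection `A`. -/
def IsRepr (A : ℕ → Set ℤ) (n : ℤ) (a : ℕ → ℤ) : Prop :=
  (∀ i, a i ∈ A i) ∧ (Function.support a).Finite ∧ n = ∑ᶠ i, a i

-- Part 0
lemma ceil_le_fold (F : List ℚ) {q : ℚ} (hq : q ∈ F) :
    ⌈q⌉ ≤ (F.map fun q => ⌈q⌉).foldr max 0 := by
  induction F with
  | nil => simp at hq
  | cons p l ih =>
    simp only [List.map_cons, List.foldr_cons]
    rcases List.mem_cons.1 hq with h | h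
    · subst h; exact le_max_left _ _
    · exact le_trans (ih h) (le_max_right _ _)

lemma two_le_bBase (F : List ℚ) (hne : F ≠ []) (hpos : ∀ q ∈ F, 0 < q) :
    2 ≤ bBase F := by
  obtain ⟨q, l, rfl⟩ := List.exists_cons_of_ne_nil hne
  have h1 : (0:ℚ) < q := hpos q List.mem_cons_self
  have h2 : 1 ≤ ⌈q⌉ := by
    rwa [Int.le_ceil_iff, Int.cast_one, sub_self]
  have := ceil_le_fold (q :: l) List.mem_cons_self
  unfold bBase
  omega

lemma bBase_pos {F : List ℚ} (hb : 2 ≤ bBase F) : (0:ℤ) < bBase F := by omega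

lemma bF_pos {F : List ℚ} (hb : 2 ≤ bBase F) (i : ℕ) : 0 < bF F i :=
  pow_pos (by omega) _

lemma two_le_bF {F : List ℚ} (hb : 2 ≤ bBase F) (i : ℕ) : 2 ≤ bF F i :=
  le_trans hb (le_self_pow₀ (by omega) (Nat.succ_ne_zero i))

lemma bF_succ (F : List ℚ) (i : ℕ) : bF F (i + 1) = bF F i * bBase F := by
  simp [bF, pow_succ]

lemma bF_mono {F : List ℚ} (hb : 2 ≤ bBase F) {i j : ℕ} (h : i ≤ j) :
    bF F i ≤ bF F j :=
  pow_le_pow_right₀ (by omega) (by omega)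

-- Part 1 : step bound
lemma step_le {F : List ℚ} (hb : 2 ≤ bBase F) (m : ℕ) :
    (fractranStep F m : ℤ) ≤ (m : ℤ) * (bBase F - 1) := by
  have hm : (0:ℤ) ≤ (m:ℤ) := Int.natCast_nonneg m
  have hrhs : (0:ℤ) ≤ (m:ℤ) * (bBase F - 1) := mul_nonneg hm (by omega)
  unfold fractranStep
  split
  · simpa using hrhs
  · rcases hfind : F.find? (fun q => ((m : ℚ) * q).den == 1) with _ | q
    · simpa using hrhs
    · simp only
      have hqF : q ∈ F := List.mem_of_find?_eq_some hfind
      have hden : ((m : ℚ) * q).den = 1 := by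
        have := List.find?_some hfind
        simpa using this
      have hnum : (((m : ℚ) * q).num : ℚ) = (m : ℚ) * q :=
        (Rat.den_eq_one_iff _).1 hden
      have hq : q ≤ (bBase F - 1 : ℤ) := by
        calc q ≤ (⌈q⌉ : ℚ) := Int.le_ceil q
        _ ≤ ((bBase F - 1 : ℤ) : ℚ) := by
              have := ceil_le_fold F hqF
              have : ⌈q⌉ ≤ bBase F - 1 := by unfold bBase at *; omega
              exact_mod_cast this
      have hnumle : ((m : ℚ) * q).num ≤ (m : ℤ) * (bBase F - 1) := by
        have h1 : (m : ℚ) * q ≤ (m : ℚ) * ((bBase F - 1 : ℤ) : ℚ) := by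
          apply mul_le_mul_of_nonneg_left hq (by positivity)
        rw [← hnum] at h1
        exact_mod_cast h1
      have : ((((m : ℚ) * q).num.toNat : ℤ)) = max ((m : ℚ) * q).num 0 := by
        simp [Int.ofNat_toNat]
      rw [this]
      exact max_le hnumle hrhs

-- digit lemmas
lemma fractranStep_zero (F : List ℚ) : fractranStep F 0 = 0 := by simp [fractranStep]

lemma digit_nonneg (F : List ℚ) (i : ℕ) (r : ℤ) : 0 ≤ digitF F i r := by
  unfold digitF; split
  · omega
  · exact Int.natCast_nonneg _

lemma digit_le {F : List ℚ} (hb : 2 ≤ bBase F) {i : ℕ} {r : ℤ}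
    (h0 : 0 ≤ r) (h1 : r < bF F i) :
    digitF F i r ≤ bF F (i + 1) - bF F i := by
  have h2 := two_le_bF hb i
  have hsucc := bF_succ F i
  unfold digitF; split
  · nlinarith
  · have := step_le hb r.toNat
    rw [Int.toNat_of_nonneg h0] at this
    nlinarith

lemma fFr_eq {F : List ℚ} (hb : 2 ≤ bBase F) (i : ℕ) (n : ℤ) :
    fFr F i n = n / bF F i + digitF F i (n % bF F i) := by
  have hbne : bF F i ≠ 0 := by have := bF_pos hb i; omega
  show (n - n % bF F i) / bF F i + digitF F i (n % bF F i) = _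
  congr 1
  have h : n - n % bF F i = bF F i * (n / bF F i) := by
    have := Int.mul_ediv_add_emod n (bF F i)
    omega
  rw [h, Int.mul_ediv_cancel_left _ hbne]

lemma digit_zero {F : List ℚ} (hb : 2 ≤ bBase F) (i : ℕ) : digitF F i 0 = 0 := by
  have := two_le_bF hb i
  unfold digitF
  rw [if_neg (by omega)]
  simp [fractranStep_zero]

lemma fFr_zero {F : List ℚ} (hb : 2 ≤ bBase F) (i : ℕ) : fFr F i 0 = 0 := by
  rw [fFr_eq hb, Int.zero_emod, Int.zero_ediv, digit_zero hb, add_zero]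

lemma fFr_of_small {F : List ℚ} (hb : 2 ≤ bBase F) {i : ℕ} {n : ℤ}
    (h0 : 0 ≤ n) (h1 : n < bF F i) : fFr F i n = digitF F i n := by
  rw [fFr_eq hb, Int.emod_eq_of_lt h0 h1, Int.ediv_eq_zero_of_lt h0 h1, zero_add]

lemma fFr_mul {F : List ℚ} (hb : 2 ≤ bBase F) (i : ℕ) (x : ℤ) :
    fFr F i (bF F i * x) = x := by
  have hbne : bF F i ≠ 0 := by have := bF_pos hb i; omega
  rw [fFr_eq hb, Int.mul_emod_right, digit_zero hb, add_zero,
    Int.mul_ediv_cancel_left _ hbne]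

lemma fFr_neg_one {F : List ℚ} (hb : 2 ≤ bBase F) (i : ℕ) : fFr F i (-1) = 0 := by
  have h2 := two_le_bF hb i
  have hmod : (-1) % bF F i = bF F i - 1 := by
    have : (-1 : ℤ) % bF F i = (-1 + bF F i * 1) % bF F i := by
      rw [Int.add_mul_emod_self_left]
    rw [this, mul_one]
    have := Int.emod_eq_of_lt (a := -1 + bF F i) (b := bF F i) (by omega) (by omega)
    omega
  rw [fFr_eq hb, hmod]
  unfold digitF
  rw [if_pos rfl]
  have : (-1) / bF F i = -1 := by
    have h := Int.mul_ediv_add_emod (-1) (bF F i)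
    rw [hmod] at h
    have hbne : bF F i ≠ 0 := by omega
    have : bF F i * ((-1) / bF F i) = bF F i * (-1) := by omega
    exact mul_left_cancel₀ hbne this
  omega

/-- The canonical digit of `m` at level `i`. -/
def tdig (F : List ℚ) (i : ℕ) (m : ℤ) : ℤ := m - bF F i * fFr F i m

lemma tdig_eq {F : List ℚ} (hb : 2 ≤ bBase F) (i : ℕ) (m : ℤ) :
    tdig F i m = m % bF F i - bF F i * digitF F i (m % bF F i) := by
  unfold tdig
  rw [fFr_eq hb]
  have h := Int.mul_ediv_add_emod m (bF F i)
  ring_nf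
  ring_nf at h
  nlinarith [h]

lemma tdig_mem {F : List ℚ} (hb : 2 ≤ bBase F) (i : ℕ) (m : ℤ) :
    tdig F i m ∈ TFr F i := by
  have hbp := bF_pos hb i
  exact ⟨m % bF F i, ⟨Int.emod_nonneg m (by omega), Int.emod_lt_of_pos m hbp⟩,
    (tdig_eq hb i m).symm⟩

lemma tdig_zero {F : List ℚ} (hb : 2 ≤ bBase F) (i : ℕ) : tdig F i 0 = 0 := by
  unfold tdig; rw [fFr_zero hb]; ring

lemma tdig_unique {F : List ℚ} (hb : 2 ≤ bBase F) {i : ℕ} {t m : ℤ}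
    (ht : t ∈ TFr F i) (hdvd : bF F i ∣ m - t) : t = tdig F i m := by
  obtain ⟨r, ⟨hr0, hr1⟩, rfl⟩ := ht
  beta_reduce at hdvd ⊢
  have hbp := bF_pos hb i
  have hrm : r = m % bF F i := by
    have h1 : (r - bF F i * digitF F i r) % bF F i = r % bF F i := by
      have he : r - bF F i * digitF F i r = r + bF F i * (-(digitF F i r)) := by ring
      rw [he, Int.add_mul_emod_self_left]
    have h2 : m % bF F i = (r - bF F i * digitF F i r) % bF F i := by
      obtain ⟨c, hc⟩ := hdvd
      have : m = (r - bF F i * digitF F i r) + bF F i * c := by omega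
      rw [this, Int.add_mul_emod_self_left]
    rw [h1, Int.emod_eq_of_lt hr0 hr1] at h2
    omega
  rw [tdig_eq hb, ← hrm]

lemma prodBases_pos {F : List ℚ} (hb : 2 ≤ bBase F) (k : ℕ) :
    0 < prodBases (bF F) k :=
  Finset.prod_pos fun j _ => bF_pos hb j

lemma prodBases_succ (F : List ℚ) (k : ℕ) :
    prodBases (bF F) (k + 1) = prodBases (bF F) k * bF F k :=
  Finset.prod_range_succ _ _

lemma prodBases_dvd {F : List ℚ} {k i : ℕ} (h : k ≤ i) :
    prodBases (bF F) k ∣ prodBases (bF F) i := by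
  unfold prodBases
  exact Finset.prod_dvd_prod_of_subset _ _ _ (Finset.range_subset_range.2 h)

lemma traj_succ (F : List ℚ) (n : ℤ) (i : ℕ) :
    trajFr F n (i + 1) = fFr F i (trajFr F n i) := rfl

/-- The canonical representation term. -/
def canonRep (F : List ℚ) (n : ℤ) (i : ℕ) : ℤ :=
  prodBases (bF F) i * tdig F i (trajFr F n i)

lemma canonRep_eq (F : List ℚ) (n : ℤ) (i : ℕ) :
    canonRep F n i = prodBases (bF F) i * trajFr F n i
      - prodBases (bF F) (i + 1) * trajFr F n (i + 1) := by
  unfold canonRep tdig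
  rw [prodBases_succ, traj_succ]
  ring

lemma sum_canonRep (F : List ℚ) (n : ℤ) (K : ℕ) :
    ∑ i ∈ Finset.range K, canonRep F n i
      = n - prodBases (bF F) K * trajFr F n K := by
  have h : ∀ i ∈ Finset.range K, canonRep F n i =
      (fun j => prodBases (bF F) j * trajFr F n j) i
        - (fun j => prodBases (bF F) j * trajFr F n j) (i + 1) := by
    intro i _; exact canonRep_eq F n i
  rw [Finset.sum_congr rfl h, Finset.sum_range_sub']
  simp [prodBases, trajFr]

lemma repr_sum_range {a : ℕ → ℤ} {n : ℤ}
    (hfin : (Function.support a).Finite) (hsum : n = ∑ᶠ i, a i) :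
    ∃ N₀, ∀ N, N₀ ≤ N → n = ∑ i ∈ Finset.range N, a i := by
  obtain ⟨N₀, hN₀⟩ := hfin.toFinset.exists_nat_subset_range
  refine ⟨N₀, fun N hN => ?_⟩
  rw [hsum]
  apply finsum_eq_sum_of_support_subset
  intro x hx
  have : x ∈ hfin.toFinset := hfin.mem_toFinset.2 hx
  have := hN₀ this
  simp only [Finset.coe_range, Set.mem_Iio, Finset.mem_range] at *
  omega

lemma repr_struct {F : List ℚ} (hb : 2 ≤ bBase F) {n : ℤ} {a : ℕ → ℤ}
    (h : IsRepr (memberSet (bF F) (TFr F)) n a) (k : ℕ) :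
    (n = ∑ i ∈ Finset.range k, a i + prodBases (bF F) k * trajFr F n k)
      ∧ a k = canonRep F n k := by
  obtain ⟨hmem, hfin, hsum⟩ := h
  obtain ⟨N₀, hN⟩ := repr_sum_range hfin hsum
  have step : ∀ k, (n = ∑ i ∈ Finset.range k, a i + prodBases (bF F) k * trajFr F n k)
      → a k = canonRep F n k := by
    intro k hk
    obtain ⟨t, ht, hak⟩ := hmem k
    beta_reduce at hak
    set N := max N₀ (k + 1) with hNdef
    have h1 : n = ∑ i ∈ Finset.range N, a i := hN N (le_max_left _ _)
    have hsplit : ∑ i ∈ Finset.range N, a i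
        = ∑ i ∈ Finset.range (k+1), a i + ∑ i ∈ Finset.Ico (k+1) N, a i := by
      rw [Finset.range_eq_Ico, Finset.range_eq_Ico]
      exact (Finset.sum_Ico_consecutive a (Nat.zero_le _) (le_max_right N₀ (k+1))).symm
    have hdvd : prodBases (bF F) (k+1) ∣ ∑ i ∈ Finset.Ico (k+1) N, a i := by
      apply Finset.dvd_sum
      intro i hi
      obtain ⟨t', _, hat'⟩ := hmem i
      beta_reduce at hat'
      rw [← hat']
      exact Dvd.dvd.mul_right (prodBases_dvd (Finset.mem_Ico.1 hi).1) _
    have hPk : prodBases (bF F) k ≠ 0 := by have := prodBases_pos hb k; omega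
    have hsum_succ : ∑ i ∈ Finset.range (k+1), a i
        = ∑ i ∈ Finset.range k, a i + a k := Finset.sum_range_succ a k
    have hdvd2 : prodBases (bF F) k * bF F k ∣
        prodBases (bF F) k * (trajFr F n k - t) := by
      rw [← prodBases_succ]
      have : prodBases (bF F) k * (trajFr F n k - t)
          = ∑ i ∈ Finset.Ico (k+1) N, a i := by
        rw [mul_sub, hak]
        linarith [h1, hsplit, hsum_succ, hk]
      rw [this]; exact hdvd
    have hdvd3 : bF F k ∣ trajFr F n k - t :=
      (mul_dvd_mul_iff_left hPk).1 hdvd2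
    have := tdig_unique hb ht hdvd3
    rw [← hak, this]
    rfl
  have main : ∀ k, n = ∑ i ∈ Finset.range k, a i + prodBases (bF F) k * trajFr F n k := by
    intro k
    induction k with
    | zero => simp [prodBases, trajFr]
    | succ k ih =>
      have hak := step k ih
      rw [Finset.sum_range_succ, hak, canonRep_eq]
      linarith [ih]
  exact ⟨main k, step k (main k)⟩

lemma traj_stable {F : List ℚ} (hb : 2 ≤ bBase F) {n : ℤ} {K : ℕ}
    (hK : trajFr F n K = 0) {i : ℕ} (hi : K ≤ i) : trajFr F n i = 0 := by
  obtain ⟨j, rfl⟩ := Nat.exists_eq_add_of_le hi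
  clear hi
  induction j with
  | zero => exact hK
  | succ j ih => rw [← Nat.add_assoc, traj_succ, ih, fFr_zero hb]

lemma repr_of_traj {F : List ℚ} (hb : 2 ≤ bBase F) {n : ℤ} {K : ℕ}
    (hK : trajFr F n K = 0) :
    IsRepr (memberSet (bF F) (TFr F)) n (canonRep F n) := by
  have hsupp : Function.support (canonRep F n) ⊆ ↑(Finset.range K) := by
    intro i hi
    simp only [Finset.coe_range, Set.mem_Iio]
    by_contra hKi
    push_neg at hKi
    have h0 : trajFr F n i = 0 := traj_stable hb hK hKi
    have : canonRep F n i = 0 := by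
      unfold canonRep; rw [h0, tdig_zero hb]; ring
    exact hi this
  refine ⟨fun i => ⟨tdig F i (trajFr F n i), tdig_mem hb i _, rfl⟩,
    Set.Finite.subset (Finset.range K).finite_toSet hsupp, ?_⟩
  rw [finsum_eq_sum_of_support_subset _ hsupp, sum_canonRep, hK]
  ring

lemma traj_dies_of_repr {F : List ℚ} (hb : 2 ≤ bBase F) {n : ℤ} {a : ℕ → ℤ}
    (h : IsRepr (memberSet (bF F) (TFr F)) n a) : ∃ K, trajFr F n K = 0 := by
  obtain ⟨N₀, hN⟩ := repr_sum_range h.2.1 h.2.2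
  refine ⟨N₀, ?_⟩
  have h1 := (repr_struct hb h N₀).1
  have h2 := hN N₀ le_rfl
  have hP : prodBases (bF F) N₀ ≠ 0 := by have := prodBases_pos hb N₀; omega
  have : prodBases (bF F) N₀ * trajFr F n N₀ = 0 := by omega
  exact (mul_eq_zero.1 this).resolve_left hP |> id

lemma iter_zero (F : List ℚ) (k : ℕ) : (fractranStep F)^[k] 0 = 0 := by
  induction k with
  | zero => rfl
  | succ k ih => rw [Function.iterate_succ_apply', ih, fractranStep_zero]

lemma orbit_le {F : List ℚ} (hb : 2 ≤ bBase F) (n : ℕ) (t : ℕ) :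
    ((fractranStep F)^[t] n : ℤ) ≤ (n : ℤ) * (bBase F - 1) ^ t := by
  induction t with
  | zero => simp
  | succ t ih =>
    rw [Function.iterate_succ_apply', pow_succ]
    calc (fractranStep F ((fractranStep F)^[t] n) : ℤ)
        ≤ ((fractranStep F)^[t] n : ℤ) * (bBase F - 1) := step_le hb _
      _ ≤ (n : ℤ) * (bBase F - 1) ^ t * (bBase F - 1) := by
          apply mul_le_mul_of_nonneg_right ih (by omega)
      _ = (n : ℤ) * ((bBase F - 1) ^ t * (bBase F - 1)) := by ring

lemma traj_follow {F : List ℚ} (hb : 2 ≤ bBase F) {n : ℤ} {j : ℕ} {v : ℕ}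
    (hv : trajFr F n j = (v : ℤ)) (hsm : (v : ℤ) < bF F j) (t : ℕ)
    (hnc : ∀ s < t, ((fractranStep F)^[s] v : ℤ) ≠ bF F (j + s) - 1) :
    trajFr F n (j + t) = ((fractranStep F)^[t] v : ℤ)
      ∧ ((fractranStep F)^[t] v : ℤ) < bF F (j + t) := by
  induction t with
  | zero => exact ⟨hv, hsm⟩
  | succ t ih =>
    obtain ⟨hvt, hlt⟩ := ih (fun s hs => hnc s (by omega))
    have hv0 : (0:ℤ) ≤ ((fractranStep F)^[t] v : ℤ) := Int.natCast_nonneg _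
    have hne := hnc t (by omega)
    have hstep : trajFr F n (j + (t + 1))
        = (fractranStep F ((fractranStep F)^[t] v) : ℤ) := by
      have : j + (t + 1) = (j + t) + 1 := by omega
      rw [this, traj_succ, hvt, fFr_of_small hb hv0 hlt]
      unfold digitF
      rw [if_neg hne, Int.toNat_natCast]
    have hbnd : (fractranStep F ((fractranStep F)^[t] v) : ℤ) < bF F (j + (t + 1)) := by
      have h1 := step_le hb ((fractranStep F)^[t] v)
      have h2 : bF F (j + (t + 1)) = bF F (j + t) * bBase F := by
        have : j + (t + 1) = (j + t) + 1 := by omega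
        rw [this, bF_succ]
      have h3 := two_le_bF hb (j + t)
      nlinarith
    rw [Function.iterate_succ_apply']
    exact ⟨hstep, hbnd⟩

lemma traj_scale {F : List ℚ} (hb : 2 ≤ bBase F) (n : ℤ) (k : ℕ) :
    ∀ i, i ≤ k → trajFr F (prodBases (bF F) k * n) i
      = (∏ j ∈ Finset.Ico i k, bF F j) * n := by
  intro i hi
  induction i with
  | zero =>
    show prodBases (bF F) k * n = _
    unfold prodBases
    rw [Finset.range_eq_Ico]
  | succ i ih =>
    have hik : i < k := by omega
    have h1 : (∏ j ∈ Finset.Ico i k, bF F j)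
        = bF F i * ∏ j ∈ Finset.Ico (i + 1) k, bF F j :=
      Finset.prod_eq_prod_Ico_succ_bot hik _
    rw [traj_succ, ih (by omega), h1, mul_assoc, fFr_mul hb]

lemma self_le_ediv {a b : ℤ} (ha : a ≤ 0) (hb : 0 < b) : a ≤ a / b := by
  rw [Int.le_ediv_iff_mul_le hb]; nlinarith

lemma traj_bounds {F : List ℚ} (hb : 2 ≤ bBase F) (n : ℤ) (i : ℕ) :
    min n (-1) ≤ trajFr F n i ∧ trajFr F n i ≤ max n 0 + bF F i := by
  induction i with
  | zero =>
    have h1 := bF_pos hb 0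
    have h0 : trajFr F n 0 = n := rfl
    exact ⟨by rw [h0]; exact min_le_left _ _, by rw [h0]; linarith [le_max_left n 0]⟩
  | succ i ih =>
    obtain ⟨hl, hu⟩ := ih
    set m := trajFr F n i with hm
    have hbp := bF_pos hb i
    have hb2 := two_le_bF hb i
    have hbne : bF F i ≠ 0 := by omega
    have hr0 : 0 ≤ m % bF F i := Int.emod_nonneg m hbne
    have hr1 : m % bF F i < bF F i := Int.emod_lt_of_pos m hbp
    have hd0 := digit_nonneg F i (m % bF F i)
    have hd1 := digit_le hb hr0 hr1
    have hmin : min n (-1) ≤ -1 := min_le_right _ _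
    have hmax : 0 ≤ max n 0 := le_max_right _ _
    rw [traj_succ, fFr_eq hb]
    by_cases hm0 : 0 ≤ m
    · have h1 : 0 ≤ m / bF F i := Int.ediv_nonneg hm0 (le_of_lt hbp)
      have h2 : m / bF F i ≤ max n 0 / bF F i + 1 := by
        have hle : m ≤ max n 0 + 1 * bF F i := by linarith
        calc m / bF F i ≤ (max n 0 + 1 * bF F i) / bF F i := Int.ediv_le_ediv hbp hle
          _ = max n 0 / bF F i + 1 := Int.add_mul_ediv_right _ _ hbne
      have h3 : max n 0 / bF F i ≤ max n 0 := Int.ediv_le_self _ hmax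
      constructor
      · linarith
      · linarith
    · push_neg at hm0
      have h1 : m / bF F i ≤ 0 := by
        have := Int.ediv_le_ediv hbp (le_of_lt hm0)
        rwa [Int.zero_ediv] at this
      have h2 : m ≤ m / bF F i := self_le_ediv (le_of_lt hm0) hbp
      constructor
      · linarith
      · linarith

lemma fFr_range {F : List ℚ} (hb : 2 ≤ bBase F) {i : ℕ} {m : ℤ}
    (hlo : -bF F i ≤ m) (hhi : m ≤ 2 * bF F i - 2) :
    -1 ≤ fFr F i m ∧ fFr F i m < bF F (i + 1) := by
  have hbp := bF_pos hb i
  have hb2 := two_le_bF hb i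
  have hbne : bF F i ≠ 0 := by omega
  have hr0 : 0 ≤ m % bF F i := Int.emod_nonneg m hbne
  have hr1 : m % bF F i < bF F i := Int.emod_lt_of_pos m hbp
  have hd0 := digit_nonneg F i (m % bF F i)
  have hd1 := digit_le hb hr0 hr1
  rw [fFr_eq hb]
  by_cases hm0 : 0 ≤ m
  · have h1 : 0 ≤ m / bF F i := Int.ediv_nonneg hm0 (le_of_lt hbp)
    have h2 : m / bF F i < 2 := by
      rw [Int.ediv_lt_iff_lt_mul hbp]; linarith
    constructor
    · linarith
    · linarith
  · push_neg at hm0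
    have hmod : m % bF F i = m + bF F i := by
      have h1 : m % bF F i = (m + bF F i * 1) % bF F i := by
        rw [Int.add_mul_emod_self_left]
      rw [h1, mul_one]
      exact Int.emod_eq_of_lt (by linarith) (by linarith)
    have hdiv : m / bF F i = -1 := by
      have h := Int.mul_ediv_add_emod m (bF F i)
      rw [hmod] at h
      have h2 : bF F i * (m / bF F i) = bF F i * (-1) := by linarith
      exact mul_left_cancel₀ hbne h2
    rw [hdiv]
    constructor
    · linarith
    · linarith

lemma exists_nonneg_small {F : List ℚ} (hb : 2 ≤ bBase F) (n : ℤ) :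
    (∃ K, trajFr F n K = 0)
      ∨ ∃ j, 0 ≤ trajFr F n j ∧ trajFr F n j < bF F j := by
  obtain ⟨k₀, hk₀⟩ := pow_unbounded_of_one_lt
    (max (max n 0 + 2) (-(min n (-1)))) (show (1:ℤ) < bBase F by omega)
  have hpow : bBase F ^ k₀ ≤ bF F k₀ :=
    pow_le_pow_right₀ (by omega) (by omega)
  have hbig1 : max n 0 + 2 ≤ bF F k₀ := by
    have := le_max_left (max n 0 + 2) (-(min n (-1))); linarith
  have hbig2 : -(min n (-1)) ≤ bF F k₀ := by
    have := le_max_right (max n 0 + 2) (-(min n (-1))); linarith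
  obtain ⟨hl, hu⟩ := traj_bounds hb n k₀
  have h1 := fFr_range hb (i := k₀) (m := trajFr F n k₀) (by linarith) (by linarith)
  rw [← traj_succ] at h1
  rcases eq_or_lt_of_le h1.1 with heq | hlt
  · left
    exact ⟨k₀ + 2, by rw [traj_succ, ← heq, fFr_neg_one hb]⟩
  · right
    exact ⟨k₀ + 1, by omega, h1.2⟩

lemma exists_min_witness {P : ℕ → Prop} (h : ∃ s, P s) :
    ∃ s, P s ∧ ∀ s' < s, ¬ P s' := by
  classical
  exact ⟨Nat.find h, Nat.find_spec h, fun s' hs' => Nat.find_min h hs'⟩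

lemma reach_zero_of_one_aux {F : List ℚ} (hb : 2 ≤ bBase F)
    (hH : ∀ m : ℕ, FractranHalts F m) {n : ℤ} :
    ∀ fuel j, trajFr F n j = 1 →
      (∀ t : ℕ, ((fractranStep F)^[t] 1 : ℤ) < bF F (j + fuel) - 1) →
      ∃ K, trajFr F n K = 0 := by
  intro fuel
  induction fuel with
  | zero =>
    intro j hj hbnd
    obtain ⟨s₁, hs₁⟩ := hH 1
    have hj' : trajFr F n j = ((1 : ℕ) : ℤ) := by rwa [Nat.cast_one]
    have hnc : ∀ s, s < s₁ → ((fractranStep F)^[s] 1 : ℤ) ≠ bF F (j + s) - 1 := by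
      intro s _
      have h1 := hbnd s
      have h2 : bF F (j + 0) ≤ bF F (j + s) := bF_mono hb (by omega)
      omega
    have hsm : ((1 : ℕ) : ℤ) < bF F j := by
      have := two_le_bF hb j; push_cast; omega
    have hfol := traj_follow hb hj' hsm s₁ hnc
    exact ⟨j + s₁, by rw [hfol.1, hs₁]; rfl⟩
  | succ fuel ih =>
    intro j hj hbnd
    classical
    obtain ⟨s₁, hs₁⟩ := hH 1
    have hj' : trajFr F n j = ((1 : ℕ) : ℤ) := by rwa [Nat.cast_one]
    have hsm : ((1 : ℕ) : ℤ) < bF F j := by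
      have := two_le_bF hb j; push_cast; omega
    by_cases hcol : ∃ s, s < s₁ ∧ ((fractranStep F)^[s] 1 : ℤ) = bF F (j + s) - 1
    · obtain ⟨s₂, ⟨hs₂lt, hs₂eq⟩, hminP⟩ := exists_min_witness hcol
      have hmin : ∀ s, s < s₂ → ((fractranStep F)^[s] 1 : ℤ) ≠ bF F (j + s) - 1 := by
        intro s hs hcontra
        exact hminP s hs ⟨by omega, hcontra⟩
      have hfol := traj_follow hb hj' hsm s₂ hmin
      have htraj : trajFr F n (j + s₂) = bF F (j + s₂) - 1 := by
        rw [hfol.1, hs₂eq]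
      have hnext : trajFr F n (j + s₂ + 1) = 1 := by
        have hb2 := two_le_bF hb (j + s₂)
        rw [traj_succ, htraj, fFr_of_small hb (by omega) (by omega)]
        unfold digitF
        rw [if_pos rfl]
      -- s₂ < fuel + 1
      have hflt : s₂ < fuel + 1 := by
        have h1 := hbnd s₂
        rw [hs₂eq] at h1
        have h2 : bF F (j + s₂) < bF F (j + (fuel + 1)) := by omega
        by_contra hge
        push_neg at hge
        have := bF_mono hb (show j + (fuel + 1) ≤ j + s₂ by omega)
        omega
      apply ih (j + s₂ + 1) hnext
      intro t
      have h1 := hbnd t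
      have h2 : bF F (j + (fuel + 1)) ≤ bF F (j + s₂ + 1 + fuel) :=
        bF_mono hb (by omega)
      omega
    · push_neg at hcol
      have hfol := traj_follow hb hj' hsm s₁ (fun s hs => hcol s hs)
      exact ⟨j + s₁, by rw [hfol.1, hs₁]; rfl⟩

lemma reach_zero_of_one {F : List ℚ} (hb : 2 ≤ bBase F)
    (hH : ∀ m : ℕ, FractranHalts F m) {n : ℤ} {j : ℕ}
    (hj : trajFr F n j = 1) : ∃ K, trajFr F n K = 0 := by
  obtain ⟨s₁, hs₁⟩ := hH 1
  set C : ℕ := Finset.sup (Finset.range (s₁ + 1)) (fun t => (fractranStep F)^[t] 1)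
    with hCdef
  have hC : ∀ t, (fractranStep F)^[t] 1 ≤ C := by
    intro t
    by_cases ht : t ≤ s₁
    · exact Finset.le_sup (f := fun t => (fractranStep F)^[t] 1)
        (Finset.mem_range.2 (show t < s₁ + 1 by omega))
    · have : (fractranStep F)^[t] 1 = 0 := by
        have h1 : t = (t - s₁) + s₁ := by omega
        rw [h1, Function.iterate_add_apply, hs₁, iter_zero]
      omega
  obtain ⟨e, he⟩ := pow_unbounded_of_one_lt ((C : ℤ) + 1)
    (show (1:ℤ) < bBase F by omega)
  apply reach_zero_of_one_aux hb hH e j hj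
  intro t
  have h1 : (((fractranStep F)^[t] 1 : ℕ) : ℤ) ≤ (C : ℤ) := by exact_mod_cast hC t
  have h2 : bBase F ^ e ≤ bF F (j + e) := pow_le_pow_right₀ (by omega) (by omega)
  omega

lemma reach_zero_from_nonneg {F : List ℚ} (hb : 2 ≤ bBase F)
    (hH : ∀ m : ℕ, FractranHalts F m) {n : ℤ} {j : ℕ}
    (h0 : 0 ≤ trajFr F n j) (hsm : trajFr F n j < bF F j) :
    ∃ K, trajFr F n K = 0 := by
  classical
  set v : ℕ := (trajFr F n j).toNat with hvdef
  have hv : trajFr F n j = (v : ℤ) := (Int.toNat_of_nonneg h0).symm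
  have hsm' : (v : ℤ) < bF F j := by rw [← hv]; exact hsm
  obtain ⟨s₀, hs₀⟩ := hH v
  by_cases hcol : ∃ s, s < s₀ ∧ ((fractranStep F)^[s] v : ℤ) = bF F (j + s) - 1
  · obtain ⟨s₂, ⟨hs₂lt, hs₂eq⟩, hminP⟩ := exists_min_witness hcol
    have hmin : ∀ s, s < s₂ → ((fractranStep F)^[s] v : ℤ) ≠ bF F (j + s) - 1 := by
      intro s hs hcontra
      exact hminP s hs ⟨by omega, hcontra⟩
    have hfol := traj_follow hb hv hsm' s₂ hmin
    have htraj : trajFr F n (j + s₂) = bF F (j + s₂) - 1 := by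
      rw [hfol.1, hs₂eq]
    have hnext : trajFr F n (j + s₂ + 1) = 1 := by
      have hb2 := two_le_bF hb (j + s₂)
      rw [traj_succ, htraj, fFr_of_small hb (by omega) (by omega)]
      unfold digitF
      rw [if_pos rfl]
    exact reach_zero_of_one hb hH hnext
  · push_neg at hcol
    have hfol := traj_follow hb hv hsm' s₀ (fun s hs => hcol s hs)
    exact ⟨j + s₀, by rw [hfol.1, hs₀]; rfl⟩

lemma traj_dies {F : List ℚ} (hb : 2 ≤ bBase F)
    (hH : ∀ m : ℕ, FractranHalts F m) (n : ℤ) : ∃ K, trajFr F n K = 0 := by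
  rcases exists_nonneg_small hb n with h | ⟨j, h0, hsm⟩
  · exact h
  · exact reach_zero_from_nonneg hb hH h0 hsm

/-- A Fractran program `F` halts for all inputs if and only if the Fractran-type
canonical collection `𝒜_F` is complete (an additive system for `ℤ`). -/
theorem fractran_halts_iff_AF_complete
    (F : List ℚ) (hne : F ≠ []) (hpos : ∀ q ∈ F, 0 < q) :
    (∀ n : ℕ, FractranHalts F n) ↔
      (∀ n : ℤ, ∃! a : ℕ → ℤ, IsRepr (memberSet (bF F) (TFr F)) n a) := by
  have hb : 2 ≤ bBase F := two_le_bBase F hne hpos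
  constructor
  · intro hH n
    obtain ⟨K, hK⟩ := traj_dies hb hH n
    refine ⟨canonRep F n, repr_of_traj hb hK, ?_⟩
    intro a ha
    funext k
    exact (repr_struct hb ha k).2
  · intro hC n
    by_contra hnh
    have hnz : ∀ t, (fractranStep F)^[t] n ≠ 0 := fun t h => hnh ⟨t, h⟩
    have hn0 : n ≠ 0 := hnz 0
    obtain ⟨k, hk⟩ := pow_unbounded_of_one_lt ((n : ℤ) + 1)
      (show (1:ℤ) < bBase F by omega)
    have hk2 : (n : ℤ) + 2 ≤ bF F k := by
      have : bBase F ^ k ≤ bF F k := pow_le_pow_right₀ (by omega) (by omega)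
      omega
    obtain ⟨a, ha, _⟩ := hC (prodBases (bF F) k * (n : ℤ))
    obtain ⟨K, hK⟩ := traj_dies_of_repr hb ha
    have hn0' : ((n : ℤ)) ≠ 0 := by exact_mod_cast hn0
    by_cases hKk : k ≤ K
    · have hv : trajFr F (prodBases (bF F) k * (n : ℤ)) k = ((n : ℕ) : ℤ) := by
        have := traj_scale hb (n : ℤ) k k le_rfl
        rw [this]
        simp
      have hsm : ((n : ℕ) : ℤ) < bF F k := by omega
      have hnc : ∀ s, ((fractranStep F)^[s] n : ℤ) ≠ bF F (k + s) - 1 := by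
        intro s
        have horb := orbit_le hb n s
        have hp1 : (bBase F - 1) ^ s ≤ bBase F ^ s :=
          pow_le_pow_left₀ (by omega) (by omega) s
        have hp2 : (1:ℤ) ≤ bBase F ^ s := one_le_pow₀ (by omega)
        have hpadd : bF F (k + s) = bF F k * bBase F ^ s := by
          unfold bF
          rw [← pow_add]
          congr 1
          omega
        have hnn : (0:ℤ) ≤ (n : ℤ) := Int.natCast_nonneg n
        have h1 : (n : ℤ) * (bBase F - 1) ^ s ≤ (n : ℤ) * bBase F ^ s :=
          mul_le_mul_of_nonneg_left hp1 hnn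
        have h2 : (n : ℤ) * bBase F ^ s ≤ (bF F k - 2) * bBase F ^ s :=
          mul_le_mul_of_nonneg_right (by omega) (by positivity)
        have h3 : (bF F k - 2) * bBase F ^ s = bF F (k + s) - 2 * bBase F ^ s := by
          rw [hpadd]; ring
        intro hcontra
        nlinarith
      have hfol := traj_follow hb hv hsm (K - k) (fun s _ => hnc s)
      have : trajFr F (prodBases (bF F) k * (n : ℤ)) (k + (K - k)) = 0 := by
        rw [show k + (K - k) = K by omega, hK]
      rw [hfol.1] at this
      exact hnz (K - k) (by exact_mod_cast this)
    · have := traj_scale hb (n : ℤ) k K (by omega)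
      rw [hK] at this
      have hprod : 0 < ∏ j ∈ Finset.Ico K k, bF F j :=
        Finset.prod_pos fun j _ => bF_pos hb j
      exact mul_ne_zero (by omega) hn0' this.symm
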